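/- Let C ⊆ ℝⁿ be a nonempty compact convex set such that max_{x ∈ C} ⟨w, x⟩ ∈ ℤ for every w ∈ ℤⁿ. Then every rational supporting hyperplane of C contains an integral point. -/
import Mathlib

lemma bezout_sum {ι : Type*} [DecidableEq ι] (s : Finset ι) (u : ι → ℤ) :
    ∃ x : ι → ℤ, ∑ i ∈ s, u i * x i = s.gcd u := by
  induction s using Finset.cons_induction with
  | empty => exact ⟨0, by simp⟩
  | cons a s ha ih =>
      obtain ⟨x, hx⟩ := ih
      set A := Int.gcdA (u a) (s.gcd u)
      set B := Int.gcdB (u a) (s.gcd u)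
      refine ⟨Function.update (fun i => B * x i) a A, ?_⟩
      have h1 : ∑ i ∈ s, u i * Function.update (fun i => B * x i) a A i
          = ∑ i ∈ s, u i * (B * x i) := by
        refine Finset.sum_congr rfl fun i hi => ?_
        rw [Function.update_of_ne (fun h : i = a => ha (h ▸ hi))]
      have h2 : ∑ i ∈ s, u i * (B * x i) = s.gcd u * B := by
        rw [mul_comm (s.gcd u) B, ← hx, Finset.mul_sum]
        exact Finset.sum_congr rfl fun i _ => by ring
      rw [Finset.sum_cons, Function.update_self, h1, h2]
      have h3 : (Finset.cons a s ha).gcd u = GCDMonoid.gcd (u a) (s.gcd u) := by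
        rw [Finset.cons_eq_insert, Finset.gcd_insert]
      rw [h3, ← Int.coe_gcd, Int.gcd_eq_gcd_ab]

theorem stmt_4 (n : ℕ) (C : Set (Fin n → ℝ)) (hne : C.Nonempty)
    (hconv : Convex ℝ C) (hcomp : IsCompact C)
    (hint : ∀ w : Fin n → ℤ, ∃ z : ℤ,
      sSup ((fun y : Fin n → ℝ => ∑ i, (w i : ℝ) * y i) '' C) = (z : ℝ)) :
    ∀ w : Fin n → ℚ, w ≠ 0 →
      ∃ x : Fin n → ℝ, (∀ i, ∃ k : ℤ, x i = (k : ℝ)) ∧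
        (∑ i, (w i : ℝ) * x i) =
          sSup ((fun y : Fin n → ℝ => ∑ i, (w i : ℝ) * y i) '' C) := by
  intro w hw
  obtain ⟨i₀, hi₀'⟩ := Function.ne_iff.mp hw
  have hi₀ : w i₀ ≠ 0 := by simpa using hi₀'
  set D : ℕ := ∏ i, (w i).den with hDdef
  have hDpos : 0 < D := Finset.prod_pos (fun i _ => (w i).pos)
  have hden : ∀ i, (w i).den ∣ D := fun i => Finset.dvd_prod_of_mem _ (Finset.mem_univ i)
  set a : Fin n → ℤ := fun i => (w i).num * ((D / (w i).den : ℕ) : ℤ) with hadef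
  have haq : ∀ i, (a i : ℚ) = w i * D := by
    intro i
    have h1 : ((w i).den : ℚ) * ((D / (w i).den : ℕ) : ℚ) = (D : ℚ) := by
      rw [← Nat.cast_mul, Nat.mul_div_cancel' (hden i)]
    have h2 : (a i : ℚ) = ((w i).num : ℚ) * ((D / (w i).den : ℕ) : ℚ) := by
      simp only [hadef]
      rw [Int.cast_mul, Int.cast_natCast]
    rw [h2, ← Rat.mul_den_eq_num, mul_assoc, h1]
  have ha0 : a i₀ ≠ 0 := by
    refine mul_ne_zero (Rat.num_ne_zero.mpr hi₀) ?_
    have : 0 < D / (w i₀).den := Nat.div_pos (Nat.le_of_dvd hDpos (hden i₀)) (w i₀).pos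
    exact_mod_cast this.ne'
  set g : ℤ := Finset.gcd Finset.univ a with hgdef
  have hg0 : g ≠ 0 := fun h => ha0 (Finset.gcd_eq_zero_iff.mp h i₀ (Finset.mem_univ i₀))
  have hgnn : 0 ≤ g := by
    rw [hgdef, ← Finset.normalize_gcd, ← Int.abs_eq_normalize]
    exact abs_nonneg _
  have hgpos : 0 < g := lt_of_le_of_ne hgnn (Ne.symm hg0)
  set u : Fin n → ℤ := fun i => a i / g with hudef
  have hgu : ∀ i, a i = g * u i := fun i =>
    (Int.mul_ediv_cancel' (Finset.gcd_dvd (Finset.mem_univ i))).symm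
  have hgcdu : Finset.gcd Finset.univ u = 1 :=
    Finset.gcd_div_eq_one (Finset.mem_univ i₀) ha0
  obtain ⟨z, hz⟩ := hint u
  -- the functional f for u
  set f : (Fin n → ℝ) → ℝ := fun y => ∑ i, (u i : ℝ) * y i with hfdef
  have hf : Continuous f := by
    apply continuous_finset_sum
    exact fun i _ => (continuous_const.mul (continuous_apply i))
  obtain ⟨x₀, hx₀C, hx₀max'⟩ := hcomp.exists_isMaxOn hne hf.continuousOn
  have hx₀max : ∀ y ∈ C, f y ≤ f x₀ := fun y hy => hx₀max' hy
  have hsupf : sSup (f '' C) = f x₀ :=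
    le_antisymm (csSup_le (hne.image f) (by rintro b ⟨y, hy, rfl⟩; exact hx₀max y hy))
      (le_csSup (hcomp.image hf).bddAbove ⟨x₀, hx₀C, rfl⟩)
  have hfx₀ : f x₀ = (z : ℝ) := by rw [← hsupf]; exact hz
  -- relation between w-functional and f
  set c : ℝ := (g : ℝ) / (D : ℝ) with hcdef
  have hc0 : 0 < c := div_pos (by exact_mod_cast hgpos) (by exact_mod_cast hDpos)
  have hwi : ∀ i, (w i : ℝ) = c * (u i : ℝ) := by
    intro i
    have hq : (w i : ℚ) = (g : ℚ) * (u i : ℚ) / (D : ℚ) := by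
      have := haq i
      rw [hgu i] at this
      push_cast at this ⊢
      field_simp
      linarith [this]
    have := congrArg (fun q : ℚ => (q : ℝ)) hq
    push_cast at this
    rw [this, hcdef]; ring
  have hrel : ∀ y : Fin n → ℝ, (∑ i, (w i : ℝ) * y i) = c * f y := by
    intro y
    rw [hfdef, Finset.mul_sum]
    exact Finset.sum_congr rfl fun i _ => by rw [hwi i]; ring
  have hsupw : sSup ((fun y : Fin n → ℝ => ∑ i, (w i : ℝ) * y i) '' C) = c * f x₀ := by
    refine le_antisymm (csSup_le (hne.image _) ?_) (le_csSup ?_ ⟨x₀, hx₀C, by simpa using hrel x₀⟩)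
    · rintro b ⟨y, hy, rfl⟩
      have := mul_le_mul_of_nonneg_left (hx₀max y hy) hc0.le
      simpa [hrel y] using this
    · have : Continuous fun y : Fin n → ℝ => ∑ i, (w i : ℝ) * y i := by
        apply continuous_finset_sum
        exact fun i _ => (continuous_const.mul (continuous_apply i))
      exact (hcomp.image this).bddAbove
  -- Bezout solution
  obtain ⟨x, hxsum⟩ := bezout_sum Finset.univ u
  rw [hgcdu] at hxsum
  refine ⟨fun i => ((z * x i : ℤ) : ℝ), fun i => ⟨z * x i, rfl⟩, ?_⟩
  have hkey : (∑ i, (u i : ℝ) * ((z * x i : ℤ) : ℝ)) = (z : ℝ) := by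
    have : (∑ i, u i * (z * x i)) = z := by
      rw [Finset.sum_congr rfl (fun i _ => by ring : ∀ i ∈ Finset.univ, u i * (z * x i) = z * (u i * x i)),
        ← Finset.mul_sum, hxsum, mul_one]
    exact_mod_cast congrArg (fun t : ℤ => (t : ℝ)) this
  calc ∑ i, (w i : ℝ) * ((z * x i : ℤ) : ℝ)
      = c * f (fun i => ((z * x i : ℤ) : ℝ)) := hrel _
    _ = c * (z : ℝ) := by rw [show f (fun i => ((z * x i : ℤ) : ℝ)) = (z : ℝ) from hkey]
    _ = c * f x₀ := by rw [hfx₀]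
    _ = sSup ((fun y : Fin n → ℝ => ∑ i, (w i : ℝ) * y i) '' C) := hsupw.symm
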